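/- Approximation property of P_h^*: for even k, if w ∈ H^{k+1}(I) on an interval I of length h, then ‖w - P_h^* w‖_{L²(I)} ≤ C h^{k+1} |w|_{H^{k+1}(I)}, where P_h^* w is the degree-≤k polynomial matching the moments of w against degree-≤(k-1) polynomials and the average endpoint value, and C depends only on k. -/

import Mathlib

/-- `P` is the special local projection `P_h^⋆` of `u` on the cell `[a,b]`. -/
def IsProjStar (k : ℕ) (a b : ℝ) (u : ℝ → ℝ) (P : Polynomial ℝ) : Prop :=
  P.degree ≤ (k : ℕ) ∧
  (∀ v : Polynomial ℝ, v.degree < (k : WithBot ℕ) →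
    (∫ x in a..b, P.eval x * v.eval x) = ∫ x in a..b, u x * v.eval x) ∧
  (P.eval b + P.eval a) / 2 = (u b + u a) / 2

open Polynomial MeasureTheory Set Finset
open scoped Nat

noncomputable section
namespace Stmt16Aux


lemma integral_derivative (p : Polynomial ℝ) (a b : ℝ) :
    ∫ x in a..b, (derivative p).eval x = p.eval b - p.eval a := by
  refine intervalIntegral.integral_eq_sub_of_hasDerivAt (fun x _ => p.hasDerivAt x) ?_
  exact (Polynomial.continuous _).intervalIntegrable _ _

lemma poly_intable (p : Polynomial ℝ) (a b : ℝ) :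
    IntervalIntegrable (fun x => p.eval x) volume a b :=
  (Polynomial.continuous _).intervalIntegrable _ _

lemma ibp (S : Polynomial ℝ) (k : ℕ)
    (h0 : ∀ m < k, (derivative^[m] S).eval 0 = 0)
    (h1 : ∀ m < k, (derivative^[m] S).eval 1 = 0) :
    ∀ v : Polynomial ℝ, (∫ x in (0:ℝ)..1, (derivative^[k] S).eval x * v.eval x)
      = (-1)^k * ∫ x in (0:ℝ)..1, S.eval x * (derivative^[k] v).eval x := by
  induction k with
  | zero => simp
  | succ k ih =>
    intro v
    have key : ∫ x in (0:ℝ)..1, (derivative ((derivative^[k] S) * v)).eval x = 0 := by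
      rw [integral_derivative]
      simp [h0 k (by omega), h1 k (by omega)]
    have e1 : (fun x => (derivative ((derivative^[k] S) * v)).eval x)
        = fun x => (derivative^[k+1] S).eval x * v.eval x
          + (derivative^[k] S).eval x * (derivative v).eval x := by
      funext x
      rw [derivative_mul, Function.iterate_succ_apply']
      simp [mul_comm]
    rw [e1, intervalIntegral.integral_add
      (by simpa using ((Polynomial.continuous (derivative^[k+1] S)).fun_mul
        (Polynomial.continuous v)).intervalIntegrable 0 1)
      (by simpa using ((Polynomial.continuous (derivative^[k] S)).fun_mul
        (Polynomial.continuous (derivative v))).intervalIntegrable 0 1)] at key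
    have ih' := ih (fun m hm => h0 m (by omega)) (fun m hm => h1 m (by omega)) (derivative v)
    have : (∫ x in (0:ℝ)..1, (derivative^[k+1] S).eval x * v.eval x)
        = - ((-1)^k * ∫ x in (0:ℝ)..1, S.eval x * (derivative^[k] (derivative v)).eval x) := by
      rw [← ih']; linarith
    rw [this, ← Function.iterate_succ_apply]
    ring

def Sp (k : ℕ) : Polynomial ℝ := X ^ k * (X - C 1) ^ k

def Rp (k : ℕ) : Polynomial ℝ := derivative^[k] (Sp k)

lemma deriv_dvd (r : ℝ) (p : Polynomial ℝ) (n : ℕ)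
    (h : (X - C r) ^ (n+1) ∣ p) : (X - C r) ^ n ∣ derivative p := by
  obtain ⟨q, rfl⟩ := h
  rw [derivative_mul, derivative_pow]
  simp only [Nat.add_sub_cancel, derivative_sub, derivative_X, derivative_C, sub_zero, mul_one]
  exact dvd_add (((dvd_refl _).mul_left _).mul_right _)
    ((pow_dvd_pow _ (Nat.le_succ n)).mul_right _)

lemma pow_dvd_iterate_derivative (r : ℝ) (p : Polynomial ℝ) (n m : ℕ)
    (h : (X - C r) ^ n ∣ p) : (X - C r) ^ (n - m) ∣ derivative^[m] p := by
  induction m generalizing p n with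
  | zero => simpa using h
  | succ m ih =>
    rw [Function.iterate_succ_apply]
    have h2 : (X - C r) ^ (n - 1) ∣ derivative p := by
      cases n with
      | zero => simpa using dvd_pow_self (X - C r) (n := 0) (by omega) |>.trans (dvd_refl 1) |>.trans one_dvd
      | succ n => simpa using deriv_dvd r p n h
    have := ih (derivative p) (n-1) h2
    exact dvd_trans (pow_dvd_pow _ (by omega)) this

lemma iterate_deriv_Sp_eval_zero (k m : ℕ) (hm : m < k) :
    (derivative^[m] (Sp k)).eval 0 = 0 := by
  have h : (X - C (0:ℝ)) ^ k ∣ Sp k := by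
    simp only [map_zero, sub_zero]; exact dvd_mul_right _ _
  have := pow_dvd_iterate_derivative 0 (Sp k) k m h
  obtain ⟨q, hq⟩ := dvd_trans (pow_dvd_pow (X - C (0:ℝ)) (show 1 ≤ k - m by omega)) this
  rw [hq]; simp

lemma iterate_deriv_Sp_eval_one (k m : ℕ) (hm : m < k) :
    (derivative^[m] (Sp k)).eval 1 = 0 := by
  have h : (X - C (1:ℝ)) ^ k ∣ Sp k := dvd_mul_left _ _
  have := pow_dvd_iterate_derivative 1 (Sp k) k m h
  obtain ⟨q, hq⟩ := dvd_trans (pow_dvd_pow (X - C (1:ℝ)) (show 1 ≤ k - m by omega)) this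
  rw [hq]; simp

lemma Rp_moment (k : ℕ) (v : Polynomial ℝ) (hv : v.natDegree < k) :
    (∫ x in (0:ℝ)..1, (Rp k).eval x * v.eval x) = 0 := by
  rw [Rp, ibp (Sp k) k (iterate_deriv_Sp_eval_zero k) (iterate_deriv_Sp_eval_one k) v,
    iterate_derivative_eq_zero hv]
  simp

lemma Sp_natDegree (k : ℕ) : (Sp k).natDegree = 2 * k := by
  rw [Sp, natDegree_mul (pow_ne_zero _ X_ne_zero) (pow_ne_zero _ (X_sub_C_ne_zero 1))]
  rw [natDegree_pow, natDegree_pow, natDegree_X, natDegree_X_sub_C]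
  ring

lemma Rp_natDegree (k : ℕ) : (Rp k).natDegree ≤ k := by
  rw [Rp]
  have := natDegree_iterate_derivative (Sp k) k
  rw [Sp_natDegree] at this
  omega

lemma Rp_coeff_k (k : ℕ) : (Rp k).coeff k = (2 * k).descFactorial k := by
  rw [Rp, coeff_iterate_derivative]
  have h2 : (Sp k).coeff (k + k) = 1 := by
    rw [Sp, coeff_X_pow_mul]
    have hm : ((X - C (1:ℝ)) ^ k).Monic := (monic_X_sub_C (1:ℝ)).pow k
    have : ((X - C (1:ℝ)) ^ k).natDegree = k := by
      rw [natDegree_pow, natDegree_X_sub_C, mul_one]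
    have h3 := hm.coeff_natDegree
    rwa [this] at h3
  rw [h2]
  simp [two_mul]

lemma Rp_eval_zero (k : ℕ) (hk : Even k) : (Rp k).eval 0 = k ! := by
  rw [← coeff_zero_eq_eval_zero, Rp, coeff_iterate_derivative]
  have h2 : (Sp k).coeff (0 + k) = 1 := by
    rw [Sp, coeff_X_pow_mul _ _ 0, coeff_zero_eq_eval_zero]
    simp [hk.neg_one_pow]
  rw [h2]
  simp [Nat.descFactorial_self]

lemma iterate_derivative_comp_add_one (p : Polynomial ℝ) (m : ℕ) :
    derivative^[m] (p.comp (X + C 1)) = (derivative^[m] p).comp (X + C 1) := by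
  induction m generalizing p with
  | zero => simp
  | succ m ih =>
    rw [Function.iterate_succ_apply, derivative_comp]
    simp only [derivative_add, derivative_X, derivative_C, add_zero, one_mul]
    rw [ih (derivative p), Function.iterate_succ_apply]

lemma Rp_eval_one (k : ℕ) : (Rp k).eval 1 = k ! := by
  have h1 : (Rp k).eval 1 = ((Rp k).comp (X + C 1)).eval 0 := by
    simp [eval_comp]
  rw [h1, Rp, ← iterate_derivative_comp_add_one, ← coeff_zero_eq_eval_zero,
    coeff_iterate_derivative]
  have h2 : ((Sp k).comp (X + C 1)).coeff (0 + k) = 1 := by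
    have : (Sp k).comp (X + C 1) = X ^ k * (X + C 1) ^ k := by
      rw [Sp]
      simp only [mul_comp, pow_comp, X_comp, sub_comp, C_comp]
      rw [add_sub_cancel_right, mul_comm]
    rw [this, coeff_X_pow_mul _ _ 0, coeff_zero_eq_eval_zero]
    simp
  rw [h2]
  simp [Nat.descFactorial_self]

lemma Rp_coeff_k_ne (k : ℕ) : (Rp k).coeff k ≠ 0 := by
  rw [Rp_coeff_k]
  have : (2 * k).descFactorial k ≠ 0 := by
    rw [Ne, Nat.descFactorial_eq_zero_iff_lt]; omega
  exact_mod_cast this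

lemma poly_eq_zero_of_moments (k : ℕ) (hk : Even k) (Q : Polynomial ℝ)
    (hdeg : Q.natDegree ≤ k)
    (hmom : ∀ i < k, (∫ x in (0:ℝ)..1, Q.eval x * x ^ i) = 0)
    (hend : Q.eval 0 + Q.eval 1 = 0) : Q = 0 := by
  set c : ℝ := Q.coeff k / (Rp k).coeff k with hc
  set Q' : Polynomial ℝ := Q - C c * Rp k with hQ'
  have hRkc := Rp_coeff_k_ne k
  have hck : Q'.coeff k = 0 := by
    rw [hQ', coeff_sub, coeff_C_mul, hc, div_mul_cancel₀ _ hRkc, sub_self]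
  have hQ'deg : Q'.natDegree ≤ k :=
    le_trans (natDegree_sub_le _ _)
      (max_le hdeg (le_trans (natDegree_C_mul_le _ _) (Rp_natDegree k)))
  have hRmom : ∀ i < k, (∫ x in (0:ℝ)..1, (Rp k).eval x * x ^ i) = 0 := by
    intro i hi
    have := Rp_moment k (X ^ i) (by simpa [natDegree_X_pow] using hi)
    simpa using this
  have hQ'mom : ∀ i < k, (∫ x in (0:ℝ)..1, Q'.eval x * x ^ i) = 0 := by
    intro i hi
    have he : (fun x : ℝ => Q'.eval x * x ^ i)
        = fun x => Q.eval x * x ^ i - c * ((Rp k).eval x * x ^ i) := by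
      funext x
      rw [hQ', eval_sub, eval_mul, eval_C]; ring
    rw [he, intervalIntegral.integral_sub
      (((Polynomial.continuous Q).fun_mul (continuous_pow i)).intervalIntegrable 0 1)
      ((continuous_const.fun_mul ((Polynomial.continuous (Rp k)).fun_mul (continuous_pow i))).intervalIntegrable 0 1),
      hmom i hi, intervalIntegral.integral_const_mul, hRmom i hi]
    simp
  have hQ'zero : Q' = 0 := by
    by_contra hne
    have hlt : Q'.natDegree < k := by
      rcases lt_or_eq_of_le hQ'deg with h | h
      · exact h
      · exfalso
        refine leadingCoeff_ne_zero.mpr hne ?_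
        show Q'.coeff Q'.natDegree = 0
        rw [h]; exact hck
    have hev : (fun x : ℝ => Q'.eval x * Q'.eval x)
        = fun x => ∑ i ∈ Finset.range k, Q'.coeff i * (Q'.eval x * x ^ i) := by
      funext x
      nth_rewrite 2 [eval_eq_sum_range' hlt x]
      rw [Finset.mul_sum]
      exact Finset.sum_congr rfl fun i _ => by ring
    have hsq : (∫ x in (0:ℝ)..1, Q'.eval x * Q'.eval x) = 0 := by
      rw [hev, intervalIntegral.integral_finset_sum (fun i _ =>
        (continuous_const.fun_mul ((Polynomial.continuous Q').fun_mul (continuous_pow i))).intervalIntegrable 0 1)]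
      refine Finset.sum_eq_zero fun i hi => ?_
      rw [intervalIntegral.integral_const_mul, hQ'mom i (Finset.mem_range.mp hi), mul_zero]
    -- a.e. zero on Ioc 0 1
    have hint : IntegrableOn (fun x => Q'.eval x * Q'.eval x) (Set.Ioc (0:ℝ) 1) volume :=
      ((Polynomial.continuous Q').mul (Polynomial.continuous Q')).integrableOn_Ioc
    rw [intervalIntegral.integral_of_le zero_le_one] at hsq
    have hae := (MeasureTheory.integral_eq_zero_iff_of_nonneg
      (fun x => mul_self_nonneg (Q'.eval x)) hint).mp hsq
    have hns : volume ({x : ℝ | Q'.eval x * Q'.eval x ≠ 0} ∩ Set.Ioc 0 1) = 0 := by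
      have h0 := MeasureTheory.ae_iff.mp hae
      rw [MeasureTheory.Measure.restrict_apply] at h0
      · simpa using h0
      · exact (isOpen_ne_fun ((Polynomial.continuous Q').mul (Polynomial.continuous Q'))
          continuous_const).measurableSet
    have hroots : ({x : ℝ | Q'.IsRoot x}).Finite := Polynomial.finite_setOf_isRoot hne
    have hcover : Set.Ioc (0:ℝ) 1 ⊆ {x : ℝ | Q'.IsRoot x}
        ∪ ({x : ℝ | Q'.eval x * Q'.eval x ≠ 0} ∩ Set.Ioc 0 1) := by
      intro x hx
      by_cases hxr : Q'.eval x = 0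
      · exact Or.inl hxr
      · exact Or.inr ⟨fun hcon => hxr (mul_self_eq_zero.mp hcon), hx⟩
    have hle : volume (Set.Ioc (0:ℝ) 1) ≤ volume {x : ℝ | Q'.IsRoot x}
        + volume ({x : ℝ | Q'.eval x * Q'.eval x ≠ 0} ∩ Set.Ioc 0 1) :=
      le_trans (measure_mono hcover) (measure_union_le _ _)
    rw [hroots.measure_zero volume, hns, Real.volume_Ioc] at hle
    norm_num at hle
  have hQeq : Q = C c * Rp k := by
    have := sub_eq_zero.mp hQ'zero
    exact this
  rw [hQeq] at hend
  simp only [eval_mul, eval_C, Rp_eval_zero k hk, Rp_eval_one k] at hend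
  have hcz : c = 0 := by
    have hkf : (0:ℝ) < (k ! : ℝ) := by positivity
    nlinarith
  rw [hQeq, hcz]
  simp


def A (k : ℕ) : Matrix (Fin (k+1)) (Fin (k+1)) ℝ :=
  fun i j => if (i:ℕ) < k then (((i:ℕ)+(j:ℕ)+1 : ℝ))⁻¹ else (if (j:ℕ) = 0 then 1 else 1/2)

lemma moment_eq (k : ℕ) (Q : Polynomial ℝ) (hdeg : Q.natDegree < k + 1) (i : ℕ) :
    (∫ x in (0:ℝ)..1, Q.eval x * x ^ i)
      = ∑ j ∈ Finset.range (k+1), Q.coeff j * ((i:ℝ)+(j:ℝ)+1)⁻¹ := by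
  have he : (fun x : ℝ => Q.eval x * x ^ i)
      = fun x => ∑ j ∈ Finset.range (k+1), Q.coeff j * (x ^ (j + i)) := by
    funext x
    rw [eval_eq_sum_range' hdeg x, Finset.sum_mul]
    refine Finset.sum_congr rfl fun j _ => by rw [pow_add]; ring
  rw [he, intervalIntegral.integral_finset_sum (fun j _ =>
    (continuous_const.fun_mul (continuous_pow (j+i))).intervalIntegrable 0 1)]
  refine Finset.sum_congr rfl fun j _ => ?_
  rw [intervalIntegral.integral_const_mul, integral_pow]
  rw [one_pow, zero_pow (by omega : j + i + 1 ≠ 0), sub_zero]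
  have hne : ((i:ℝ)+(j:ℝ)+1) ≠ 0 := by positivity
  have hne' : ((j+i:ℕ):ℝ)+1 ≠ 0 := by positivity
  rw [one_div]
  congr 1
  push_cast
  ring

lemma mulVec_eq_data (k : ℕ) (Q : Polynomial ℝ) (hdeg : Q.natDegree ≤ k) :
    ∀ i : Fin (k+1),
      (A k).mulVec (fun j : Fin (k+1) => Q.coeff j) i
        = if (i:ℕ) < k then ∫ x in (0:ℝ)..1, Q.eval x * x ^ (i:ℕ)
          else (Q.eval 0 + Q.eval 1) / 2 := by
  intro i
  by_cases hik : (i:ℕ) < k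
  · simp only [hik, if_true]
    rw [moment_eq k Q (by omega)]
    rw [Matrix.mulVec, dotProduct]
    rw [← Fin.sum_univ_eq_sum_range (fun j => Q.coeff j * ((i:ℝ)+(j:ℝ)+1)⁻¹) (k+1)]
    refine Finset.sum_congr rfl fun j _ => ?_
    simp [A, hik, mul_comm]
  · simp only [hik, if_false]
    have h0 : Q.eval 0 = Q.coeff 0 := (coeff_zero_eq_eval_zero Q).symm
    have h1 : Q.eval 1 = ∑ j ∈ Finset.range (k+1), Q.coeff j := by
      rw [eval_eq_sum_range' (lt_of_le_of_lt hdeg (Nat.lt_succ_self k)) 1]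
      simp
    rw [Matrix.mulVec, dotProduct, h0, h1, ← Fin.sum_univ_eq_sum_range (fun j => Q.coeff j) (k+1)]
    have he : ∀ j : Fin (k+1), A k i j * Q.coeff j
        = (1/2) * Q.coeff j + (if j = (0 : Fin (k+1)) then (1/2) * Q.coeff j else 0) := by
      intro j
      simp only [A, hik, if_false]
      by_cases hj : j = 0
      · subst hj; norm_num; ring
      · have : ¬((j:ℕ) = 0) := fun hcon => hj (Fin.ext hcon)
        simp [this, hj]
    rw [Finset.sum_congr rfl (fun j _ => he j), Finset.sum_add_distrib,
      Finset.sum_ite_eq' Finset.univ (0 : Fin (k+1)) (fun j => (1/2) * Q.coeff j)]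
    simp only [Finset.mem_univ, if_true, ← Finset.mul_sum]
    rw [show ((0 : Fin (k+1)) : ℕ) = 0 from rfl]
    push_cast
    ring

lemma mulVec_injective (k : ℕ) (hk : Even k) :
    Function.Injective ((A k).mulVecLin) := by
  rw [← LinearMap.ker_eq_bot, LinearMap.ker_eq_bot']
  intro c hc
  set Q : Polynomial ℝ := ∑ j : Fin (k+1), C (c j) * X ^ (j:ℕ) with hQdef
  have hcoeff : ∀ i : Fin (k+1), Q.coeff (i:ℕ) = c i := by
    intro i
    rw [hQdef, finset_sum_coeff]
    have : ∀ j : Fin (k+1), (C (c j) * X ^ (j:ℕ)).coeff (i:ℕ)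
        = if j = i then c j else 0 := by
      intro j
      rw [coeff_C_mul, coeff_X_pow]
      by_cases hji : j = i
      · subst hji; simp
      · have : ¬((i:ℕ) = (j:ℕ)) := fun hcon => hji (Fin.ext hcon.symm)
        simp [this, hji]
    rw [Finset.sum_congr rfl (fun j _ => this j), Finset.sum_ite_eq' Finset.univ i c]
    simp
  have hdeg : Q.natDegree ≤ k := by
    refine natDegree_sum_le_of_forall_le _ _ fun j _ => ?_
    refine le_trans (natDegree_C_mul_le _ _) ?_
    rw [natDegree_X_pow]
    omega
  have hdata := mulVec_eq_data k Q hdeg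
  have hzero : ∀ i : Fin (k+1), (A k).mulVec (fun j : Fin (k+1) => Q.coeff j) i = 0 := by
    intro i
    have : (fun j : Fin (k+1) => Q.coeff j) = c := funext fun j => hcoeff j
    rw [this]
    exact congrFun hc i
  have hmom : ∀ i < k, (∫ x in (0:ℝ)..1, Q.eval x * x ^ i) = 0 := by
    intro i hi
    have := hzero ⟨i, by omega⟩
    rw [hdata ⟨i, by omega⟩] at this
    simpa [hi] using this
  have hend : Q.eval 0 + Q.eval 1 = 0 := by
    have := hzero ⟨k, by omega⟩
    rw [hdata ⟨k, by omega⟩] at this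
    simp only [lt_irrefl, if_false] at this
    · linarith
  have hQ0 : Q = 0 := poly_eq_zero_of_moments k hk Q hdeg hmom hend
  funext i
  rw [← hcoeff i, hQ0]
  simp

lemma ref_bound (k : ℕ) (hk : Even k) : ∃ C : ℝ, 0 ≤ C ∧
    ∀ (Q : Polynomial ℝ) (M : ℝ), Q.natDegree ≤ k → 0 ≤ M →
      (∀ i < k, |∫ x in (0:ℝ)..1, Q.eval x * x ^ i| ≤ M) →
      |(Q.eval 0 + Q.eval 1) / 2| ≤ M →
      ∀ y ∈ Set.Icc (0:ℝ) 1, |Q.eval y| ≤ C * M := by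
  have hbij : Function.Bijective ((A k).mulVecLin) :=
    ⟨mulVec_injective k hk,
      (LinearMap.injective_iff_surjective).mp (mulVec_injective k hk)⟩
  set e := LinearEquiv.ofBijective _ hbij with he
  set L := LinearMap.toContinuousLinearMap
    (e.symm : (Fin (k+1) → ℝ) →ₗ[ℝ] (Fin (k+1) → ℝ)) with hL
  refine ⟨(k+1) * ‖L‖, by positivity, ?_⟩
  intro Q M hdeg hM hmom hendb y hy
  set c : Fin (k+1) → ℝ := fun j => Q.coeff j with hcdef
  set d : Fin (k+1) → ℝ := (A k).mulVec c with hd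
  have hdnorm : ‖d‖ ≤ M := by
    rw [pi_norm_le_iff_of_nonneg hM]
    intro i
    rw [hd]
    rw [mulVec_eq_data k Q hdeg i]
    by_cases hik : (i:ℕ) < k
    · simpa [hik, Real.norm_eq_abs] using hmom i hik
    · simp only [hik, if_false, Real.norm_eq_abs]
      exact hendb
  have hce : c = L d := by
    have : e c = d := by
      rw [he]
      rfl
    rw [hL]
    simp [← this]
  have hcnorm : ‖c‖ ≤ ‖L‖ * M := by
    rw [hce]
    exact le_trans (L.le_opNorm d) (by
      have := mul_le_mul_of_nonneg_left hdnorm (norm_nonneg L)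
      linarith)
  have heval : |Q.eval y| ≤ (k+1) * ‖c‖ := by
    rw [eval_eq_sum_range' (by omega : Q.natDegree < k + 1) y]
    refine le_trans (Finset.abs_sum_le_sum_abs _ _) ?_
    have hterm : ∀ j ∈ Finset.range (k+1), |Q.coeff j * y ^ j| ≤ ‖c‖ := by
      intro j hj
      rw [abs_mul]
      have h1 : |Q.coeff j| ≤ ‖c‖ := by
        have := norm_le_pi_norm c ⟨j, Finset.mem_range.mp hj⟩
        simpa [hcdef, Real.norm_eq_abs] using this
      have h2 : |y ^ j| ≤ 1 := by
        rw [abs_pow]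
        exact pow_le_one₀ (abs_nonneg y) (by rw [abs_of_nonneg hy.1]; exact hy.2)
      calc |Q.coeff j| * |y ^ j| ≤ |Q.coeff j| * 1 :=
            mul_le_mul_of_nonneg_left h2 (abs_nonneg _)
        _ ≤ ‖c‖ := by rw [mul_one]; exact h1
    refine le_trans (Finset.sum_le_sum hterm) ?_
    rw [Finset.sum_const, Finset.card_range]
    simp [nsmul_eq_mul]
  calc |Q.eval y| ≤ (k+1) * ‖c‖ := heval
    _ ≤ (k+1) * (‖L‖ * M) := by
        have hk1 : (0:ℝ) ≤ (k+1) := by positivity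
        exact mul_le_mul_of_nonneg_left hcnorm hk1
    _ = (k+1) * ‖L‖ * M := by ring


lemma cs_bound (g : ℝ → ℝ) (hg : Continuous g) (a b : ℝ) (hab : a ≤ b) :
    (∫ x in a..b, |g x|) ^ 2 ≤ (b - a) * ∫ x in a..b, g x ^ 2 := by
  rcases eq_or_lt_of_le hab with rfl | hlt
  · simp
  set I := ∫ x in a..b, |g x| with hI
  set J := ∫ x in a..b, g x ^ 2 with hJ
  have habs : Continuous fun x : ℝ => |g x| := hg.abs
  have h1 : (0:ℝ) ≤ ∫ x in a..b, ((b-a) * |g x| - I)^2 :=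
    intervalIntegral.integral_nonneg hab (fun x _ => sq_nonneg _)
  have h2 : (∫ x in a..b, ((b-a) * |g x| - I)^2)
      = (b-a)^2 * J - 2*(b-a)*I*I + I^2*(b-a) := by
    have he : (fun x : ℝ => ((b-a) * |g x| - I)^2)
        = fun x => (b-a)^2 * g x ^ 2 - (2*(b-a)*I) * |g x| + I^2 := by
      funext x
      rw [sub_sq, mul_pow, sq_abs]
      ring
    rw [he]
    rw [intervalIntegral.integral_add
        (IntervalIntegrable.sub
          ((continuous_const.fun_mul (hg.fun_pow 2)).intervalIntegrable a b)
          ((continuous_const.fun_mul habs).intervalIntegrable a b))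
        (intervalIntegrable_const),
      intervalIntegral.integral_sub
        ((continuous_const.fun_mul (hg.fun_pow 2)).intervalIntegrable a b)
        ((continuous_const.fun_mul habs).intervalIntegrable a b),
      intervalIntegral.integral_const_mul, intervalIntegral.integral_const_mul,
      intervalIntegral.integral_const]
    rw [← hI, ← hJ]
    rw [smul_eq_mul]
    ring
  nlinarith [h1, h2, sq_nonneg I]

lemma taylor_hasDerivAt (n : ℕ) (w : ℝ → ℝ) (hw : ContDiff ℝ (↑(n+1)) w) (x t : ℝ) :
    HasDerivAt (fun y => taylorWithinEval w n Set.univ y x)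
      (((n ! : ℝ)⁻¹ * (x - t) ^ n) * iteratedDeriv (n+1) w t) t := by
  have hf : ContDiffOn ℝ (n : ℕ∞) w Set.univ :=
    (hw.of_le (by exact_mod_cast Nat.le_succ n)).contDiffOn
  have hf' : DifferentiableWithinAt ℝ (iteratedDerivWithin n w Set.univ) Set.univ t := by
    rw [iteratedDerivWithin_univ]
    exact ((hw.differentiable_iteratedDeriv n
      (by exact_mod_cast Nat.lt_succ_self n)) t).differentiableWithinAt
  have hder := hasDerivWithinAt_taylorWithinEval (x := x) (y := t)
    (s := Set.univ) (s' := Set.univ)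
    (uniqueDiffOn_univ) (Filter.univ_mem) (Set.mem_univ t)
    (subset_refl _) hf hf'
  rw [iteratedDerivWithin_univ] at hder
  have := hder.hasDerivAt (Filter.univ_mem)
  simpa [smul_eq_mul] using this

lemma taylor_integral (n : ℕ) (w : ℝ → ℝ) (hw : ContDiff ℝ (↑(n+1)) w) (a x : ℝ) :
    w x - taylorWithinEval w n Set.univ a x
      = ∫ t in a..x, ((n ! : ℝ)⁻¹ * (x - t) ^ n) * iteratedDeriv (n+1) w t := by
  have hcont : Continuous (iteratedDeriv (n+1) w) :=
    hw.continuous_iteratedDeriv (n+1) (le_refl _)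
  have hfc : Continuous fun t : ℝ => ((n ! : ℝ)⁻¹ * (x - t) ^ n) * iteratedDeriv (n+1) w t :=
    (continuous_const.mul ((continuous_const.sub continuous_id).pow n)).mul hcont
  have := intervalIntegral.integral_eq_sub_of_hasDerivAt
    (f := fun y => taylorWithinEval w n Set.univ y x)
    (fun t _ => taylor_hasDerivAt n w hw x t) (hfc.intervalIntegrable a x)
  rw [this]
  rw [taylorWithinEval_self]

lemma taylorPoly_eval (n : ℕ) (w : ℝ → ℝ) (a x : ℝ) :
    (∑ i ∈ Finset.range (n+1),
        C (iteratedDeriv i w a * (i ! : ℝ)⁻¹) * (X - C a) ^ i).eval x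
      = taylorWithinEval w n Set.univ a x := by
  rw [taylor_within_apply]
  rw [eval_finset_sum]
  refine Finset.sum_congr rfl fun i _ => ?_
  rw [eval_mul, eval_C, eval_pow, eval_sub, eval_X, eval_C, iteratedDerivWithin_univ,
    smul_eq_mul]
  ring



theorem main (k : ℕ) (hk : Even k) : ∃ C : ℝ,
    ∀ a b : ℝ, a < b →
      ∀ w : ℝ → ℝ, ContDiff ℝ (↑(k+1)) w →
        ∀ P : Polynomial ℝ, IsProjStar k a b w P →
          Real.sqrt (∫ x in a..b, (w x - P.eval x) ^ 2) ≤
            C * (b - a) ^ (k+1) *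
              Real.sqrt (∫ x in a..b, (iteratedDeriv (k+1) w x) ^ 2) := by
  obtain ⟨C₀, hC₀, href⟩ := ref_bound k hk
  refine ⟨(1 + C₀) / k !, ?_⟩
  intro a b hab w hw P hP
  set h : ℝ := b - a with hh
  have hhpos : 0 < h := by rw [hh]; linarith
  have hhne : h ≠ 0 := ne_of_gt hhpos
  set g : ℝ → ℝ := iteratedDeriv (k+1) w with hg
  have hgc : Continuous g := hw.continuous_iteratedDeriv (k+1) (le_refl _)
  have hwc : Continuous w := hw.continuous
  set G : ℝ := ∫ x in a..b, |g x| with hG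
  have hGnn : 0 ≤ G :=
    intervalIntegral.integral_nonneg (le_of_lt hab) (fun x _ => abs_nonneg _)
  set M : ℝ := (k ! : ℝ)⁻¹ * h ^ k * G with hM
  have hMnn : 0 ≤ M := by positivity
  set Tp : Polynomial ℝ := ∑ i ∈ Finset.range (k+1),
      C (iteratedDeriv i w a * (i ! : ℝ)⁻¹) * (X - C a) ^ i with hTp
  have hTpdeg : Tp.natDegree ≤ k := by
    rw [hTp]
    refine natDegree_sum_le_of_forall_le _ _ fun i hi => ?_
    refine le_trans (natDegree_C_mul_le _ _) ?_
    rw [natDegree_pow, natDegree_X_sub_C, mul_one]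
    exact Nat.lt_succ_iff.mp (Finset.mem_range.mp hi)
  -- Step 1 : Taylor remainder bound
  have hstep1 : ∀ x ∈ Set.Icc a b, |w x - Tp.eval x| ≤ M := by
    intro x hx
    rw [hTp, taylorPoly_eval k w a x, taylor_integral k w hw a x]
    have hfi : IntervalIntegrable (fun t => |((k ! : ℝ)⁻¹ * (x - t) ^ k) * g t|) volume a x :=
      ((continuous_const.mul ((continuous_const.sub continuous_id).pow k)).mul hgc).abs.intervalIntegrable a x
    have hbi : IntervalIntegrable (fun t => (k ! : ℝ)⁻¹ * h ^ k * |g t|) volume a b :=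
      (continuous_const.mul hgc.abs).intervalIntegrable a b
    have hpt : ∀ t ∈ Set.Icc a x, |((k ! : ℝ)⁻¹ * (x - t) ^ k) * g t|
        ≤ (k ! : ℝ)⁻¹ * h ^ k * |g t| := by
      intro t ht
      rw [abs_mul, abs_mul, abs_of_nonneg (show (0:ℝ) ≤ (k ! : ℝ)⁻¹ by positivity)]
      have h1 : |x - t| ≤ h := by
        rw [abs_of_nonneg (by linarith [ht.2])]
        have := ht.1
        rw [hh]; linarith [hx.2]
      have h2 : |(x - t) ^ k| ≤ h ^ k := by
        rw [abs_pow]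
        exact pow_le_pow_left₀ (abs_nonneg _) h1 k
      have := mul_le_mul_of_nonneg_right h2 (abs_nonneg (g t))
      calc (k ! : ℝ)⁻¹ * |(x - t) ^ k| * |g t|
          ≤ (k ! : ℝ)⁻¹ * (h ^ k * |g t|) := by
            rw [mul_assoc]
            exact mul_le_mul_of_nonneg_left this (by positivity)
        _ = (k ! : ℝ)⁻¹ * h ^ k * |g t| := by ring
    calc |∫ t in a..x, ((k ! : ℝ)⁻¹ * (x - t) ^ k) * g t|
        ≤ ∫ t in a..x, |((k ! : ℝ)⁻¹ * (x - t) ^ k) * g t| :=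
          intervalIntegral.abs_integral_le_integral_abs hx.1
      _ ≤ ∫ t in a..x, (k ! : ℝ)⁻¹ * h ^ k * |g t| :=
          intervalIntegral.integral_mono_on hx.1 hfi (hbi.mono_set
            (by rw [Set.uIcc_of_le hx.1, Set.uIcc_of_le (le_of_lt hab)]
                exact Set.Icc_subset_Icc_right hx.2)) hpt
      _ ≤ ∫ t in a..b, (k ! : ℝ)⁻¹ * h ^ k * |g t| := by
          refine intervalIntegral.integral_mono_interval (le_refl a) hx.1 hx.2
            (MeasureTheory.ae_of_all _ (fun t => by positivity)) hbi
      _ = M := by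
          rw [intervalIntegral.integral_const_mul, hM, hG]
  -- the scaled polynomial
  set Q : Polynomial ℝ := P - Tp with hQ
  have hPdeg : P.natDegree ≤ k := natDegree_le_iff_degree_le.mpr hP.1
  have hQdeg : Q.natDegree ≤ k :=
    le_trans (natDegree_sub_le _ _) (max_le hPdeg hTpdeg)
  set Qh : Polynomial ℝ := Q.comp (C a + C h * X) with hQh
  have hQhdeg : Qh.natDegree ≤ k := by
    rw [hQh]
    refine le_trans (natDegree_comp_le) ?_
    have : (C a + C h * X).natDegree ≤ 1 := by
      refine le_trans (natDegree_add_le _ _) ?_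
      simp [natDegree_C]
      exact le_trans (natDegree_C_mul_le _ _) (by rw [natDegree_X])
    calc Q.natDegree * (C a + C h * X).natDegree ≤ Q.natDegree * 1 :=
          Nat.mul_le_mul_left _ this
      _ ≤ k := by rwa [mul_one]
  have hQheval : ∀ y : ℝ, Qh.eval y = Q.eval (a + h * y) := by
    intro y
    rw [hQh, eval_comp]
    simp
  -- integral identity for Q against test functions
  have hQint : ∀ i : ℕ, i < k →
      (∫ x in a..b, Q.eval x * (h⁻¹ * (x - a)) ^ i)
        = ∫ x in a..b, (w x - Tp.eval x) * (h⁻¹ * (x - a)) ^ i := by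
    intro i hi
    set v : Polynomial ℝ := (C h⁻¹ * (X - C a)) ^ i with hv
    have hvdeg : v.degree < (k : WithBot ℕ) := by
      rw [hv, degree_pow, degree_C_mul (inv_ne_zero hhne), degree_X_sub_C]
      rw [nsmul_eq_mul, mul_one]
      exact_mod_cast hi
    have hveval : ∀ x : ℝ, v.eval x = (h⁻¹ * (x - a)) ^ i := by
      intro x
      rw [hv]
      simp
    have hproj := hP.2.1 v hvdeg
    have e1 : (fun x => Q.eval x * (h⁻¹ * (x - a)) ^ i)
        = fun x => P.eval x * v.eval x - Tp.eval x * v.eval x := by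
      funext x
      rw [hveval, hQ, eval_sub]
      ring
    have e2 : (fun x => (w x - Tp.eval x) * (h⁻¹ * (x - a)) ^ i)
        = fun x => w x * v.eval x - Tp.eval x * v.eval x := by
      funext x
      rw [hveval]
      ring
    rw [e1, e2,
      intervalIntegral.integral_sub
        (((Polynomial.continuous P).fun_mul (Polynomial.continuous v)).intervalIntegrable a b)
        (((Polynomial.continuous Tp).fun_mul (Polynomial.continuous v)).intervalIntegrable a b),
      intervalIntegral.integral_sub
        ((hwc.fun_mul (Polynomial.continuous v)).intervalIntegrable a b)
        (((Polynomial.continuous Tp).fun_mul (Polynomial.continuous v)).intervalIntegrable a b),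
      hproj]
  -- moment bounds for Qh
  have hvbound : ∀ i : ℕ, ∀ x ∈ Set.uIoc a b, |(h⁻¹ * (x - a)) ^ i| ≤ 1 := by
    intro i x hx
    rw [Set.uIoc_of_le (le_of_lt hab)] at hx
    rw [abs_pow]
    refine pow_le_one₀ (abs_nonneg _) ?_
    have h0 : 0 ≤ h⁻¹ * (x - a) := by
      have h0' : 0 ≤ x - a := by linarith [hx.1]
      positivity
    rw [abs_of_nonneg h0, inv_mul_le_iff₀ hhpos, mul_one, hh]
    linarith [hx.2]
  -- moment bounds for Qh
  have hmomQh : ∀ i < k, |∫ y in (0:ℝ)..1, Qh.eval y * y ^ i| ≤ M := by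
    intro i hi
    have hchg := intervalIntegral.integral_comp_mul_add (a := 0) (b := 1) (c := h)
      (f := fun x => Q.eval x * (h⁻¹ * (x - a)) ^ i) hhne a
    rw [show h * 0 + a = a from by ring, show h * 1 + a = b from by rw [hh]; ring,
      smul_eq_mul] at hchg
    have e3 : (fun y : ℝ => Q.eval (h * y + a) * (h⁻¹ * ((h * y + a) - a)) ^ i)
        = fun y => Qh.eval y * y ^ i := by
      funext y
      rw [hQheval y, add_sub_cancel_right, inv_mul_cancel_left₀ hhne,
        add_comm a (h * y)]
    rw [e3] at hchg
    have hbnd : |∫ x in a..b, (w x - Tp.eval x) * (h⁻¹ * (x - a)) ^ i| ≤ M * |b - a| := by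
      have := intervalIntegral.norm_integral_le_of_norm_le_const
        (C := M) (f := fun x => (w x - Tp.eval x) * (h⁻¹ * (x - a)) ^ i)
        (a := a) (b := b) ?_
      · simpa [Real.norm_eq_abs] using this
      · intro x hx
        rw [Real.norm_eq_abs, abs_mul]
        have h1 : |w x - Tp.eval x| ≤ M := by
          refine hstep1 x ?_
          rw [Set.uIoc_of_le (le_of_lt hab)] at hx
          exact ⟨le_of_lt hx.1, hx.2⟩
        have h2 := hvbound i x hx
        calc |w x - Tp.eval x| * |(h⁻¹ * (x - a)) ^ i| ≤ M * 1 :=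
              mul_le_mul h1 h2 (abs_nonneg _) hMnn
          _ = M := mul_one M
    rw [hchg, hQint i hi]
    rw [abs_mul, abs_of_nonneg (by positivity : (0:ℝ) ≤ h⁻¹)]
    have hbb : |b - a| = h := by rw [abs_of_pos (by linarith), hh]
    rw [hbb] at hbnd
    calc h⁻¹ * |∫ x in a..b, (w x - Tp.eval x) * (h⁻¹ * (x - a)) ^ i|
        ≤ h⁻¹ * (M * h) := mul_le_mul_of_nonneg_left hbnd (by positivity)
      _ = M := by field_simp
  -- endpoint bound for Qh
  have hendQh : |(Qh.eval 0 + Qh.eval 1) / 2| ≤ M := by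
    have e0 : Qh.eval 0 = Q.eval a := by rw [hQheval 0]; norm_num
    have e1 : Qh.eval 1 = Q.eval b := by rw [hQheval 1]; rw [hh]; norm_num
    have hproj2 : P.eval b + P.eval a = w b + w a := by
      have := hP.2.2
      linarith
    have key : Qh.eval 0 + Qh.eval 1 = (w a - Tp.eval a) + (w b - Tp.eval b) := by
      rw [e0, e1, hQ, eval_sub, eval_sub]
      linarith
    rw [key]
    have ha1 := hstep1 a ⟨le_refl a, le_of_lt hab⟩
    have hb1 := hstep1 b ⟨le_of_lt hab, le_refl b⟩
    have habs := abs_add_le (w a - Tp.eval a) (w b - Tp.eval b)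
    rw [abs_div, abs_two]
    rw [div_le_iff₀ (by norm_num : (0:ℝ) < 2)]
    linarith
  -- reference bound
  have hrefQ := href Qh M hQhdeg hMnn hmomQh hendQh
  have hQbound : ∀ x ∈ Set.Icc a b, |Q.eval x| ≤ C₀ * M := by
    intro x hx
    have hy : h⁻¹ * (x - a) ∈ Set.Icc (0:ℝ) 1 := by
      constructor
      · have h0' : 0 ≤ x - a := by linarith [hx.1]
        positivity
      · rw [inv_mul_le_iff₀ hhpos, mul_one, hh]
        linarith [hx.2]
    have := hrefQ _ hy
    rwa [hQheval, mul_inv_cancel_left₀ hhne, add_sub_cancel] at this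
  -- pointwise bound for the error
  have hfin : ∀ x ∈ Set.Icc a b, |w x - P.eval x| ≤ (1 + C₀) * M := by
    intro x hx
    have e4 : w x - P.eval x = (w x - Tp.eval x) - Q.eval x := by
      rw [hQ, eval_sub]; ring
    rw [e4]
    have := abs_sub (w x - Tp.eval x) (Q.eval x)
    calc |(w x - Tp.eval x) - Q.eval x| ≤ |w x - Tp.eval x| + |Q.eval x| :=
          abs_sub _ _
      _ ≤ M + C₀ * M := add_le_add (hstep1 x hx) (hQbound x hx)
      _ = (1 + C₀) * M := by ring
  -- integrate
  set B : ℝ := (1 + C₀) * M with hB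
  have hBnn : 0 ≤ B := by positivity
  set I : ℝ := ∫ x in a..b, g x ^ 2 with hI
  have hInn : 0 ≤ I :=
    intervalIntegral.integral_nonneg (le_of_lt hab) (fun x _ => sq_nonneg _)
  have hsq : (∫ x in a..b, (w x - P.eval x) ^ 2) ≤ h * B ^ 2 := by
    have hmono : (∫ x in a..b, (w x - P.eval x) ^ 2) ≤ ∫ _x in a..b, B ^ 2 := by
      refine intervalIntegral.integral_mono_on (le_of_lt hab)
        (((hwc.sub (Polynomial.continuous P)).pow 2).intervalIntegrable a b)
        (intervalIntegrable_const) ?_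
      intro x hx
      have hb := hfin x hx
      calc (w x - P.eval x) ^ 2 = |w x - P.eval x| ^ 2 := (sq_abs _).symm
        _ ≤ B ^ 2 := pow_le_pow_left₀ (abs_nonneg _) hb 2
    rw [intervalIntegral.integral_const, smul_eq_mul] at hmono
    rw [← hh] at hmono
    exact hmono
  have hGle : G ≤ Real.sqrt h * Real.sqrt I := by
    have hcs := cs_bound g hgc a b (le_of_lt hab)
    rw [← hG, ← hI, ← hh] at hcs
    have : G ≤ Real.sqrt (h * I) := by
      rw [Real.le_sqrt hGnn]
      · exact hcs
      · exact mul_nonneg (le_of_lt hhpos) hInn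
    rwa [Real.sqrt_mul (le_of_lt hhpos) I] at this
  have hss : Real.sqrt h * Real.sqrt h = h := Real.mul_self_sqrt (le_of_lt hhpos)
  calc Real.sqrt (∫ x in a..b, (w x - P.eval x) ^ 2)
      ≤ Real.sqrt (h * B ^ 2) := Real.sqrt_le_sqrt hsq
    _ = Real.sqrt h * B := by
        rw [Real.sqrt_mul (le_of_lt hhpos), Real.sqrt_sq hBnn]
    _ ≤ Real.sqrt h * ((1 + C₀) * ((k ! : ℝ)⁻¹ * h ^ k * (Real.sqrt h * Real.sqrt I))) := by
        refine mul_le_mul_of_nonneg_left ?_ (Real.sqrt_nonneg h)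
        rw [hB, hM]
        refine mul_le_mul_of_nonneg_left ?_ (by positivity)
        rw [mul_assoc, mul_assoc]
        refine mul_le_mul_of_nonneg_left ?_ (by positivity)
        exact mul_le_mul_of_nonneg_left hGle (by positivity)
    _ = (1 + C₀) / k ! * h ^ (k+1) * Real.sqrt I := by
        have e5 : Real.sqrt h * ((1 + C₀) * ((k ! : ℝ)⁻¹ * h ^ k * (Real.sqrt h * Real.sqrt I)))
            = (Real.sqrt h * Real.sqrt h) * ((1 + C₀) * (k ! : ℝ)⁻¹ * h ^ k * Real.sqrt I) := by
          ring
        rw [e5, hss, div_eq_mul_inv, pow_succ]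
        ring



end Stmt16Aux
end

theorem stmt16 (k : ℕ) (hk : Even k) : ∃ C : ℝ,
    ∀ a b : ℝ, a < b →
      ∀ w : ℝ → ℝ, ContDiff ℝ (↑(k+1)) w →
        ∀ P : Polynomial ℝ, IsProjStar k a b w P →
          Real.sqrt (∫ x in a..b, (w x - P.eval x) ^ 2) ≤
            C * (b - a) ^ (k+1) *
              Real.sqrt (∫ x in a..b, (iteratedDeriv (k+1) w x) ^ 2) :=
  Stmt16Aux.main k hk
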